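/- arXiv:1805.08024 — 2 statements merged into one kernel-verified Lean document; each statement's English description precedes it below -/
import Mathlib

section
/- Let φ : ℝ² → ℝ ∪ {+∞} be lower semicontinuous, not identically +∞, and with bounded essential domain {x : φ(x) < +∞}. Then the convex hull of the epigraph {(x, z) ∈ ℝ² × ℝ : φ(x) ≤ z} is a closed subset of ℝ³; equivalently, the epigraph of conv(φ) equals the convex hull of the epigraph of φ. -/
open Set MeasureTheory
open scoped Topology ENNReal

noncomputable section

/-- The plane ℝ² with the Euclidean inner product. -/
abbrev E2 := EuclideanSpace ℝ (Fin 2)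

/-- The unit circle S¹ ⊂ ℝ². -/
def S1 : Set E2 := Metric.sphere 0 1

/-- The closed unit disk 𝔻̄ ⊂ ℝ². -/
def cDisk : Set E2 := Metric.closedBall 0 1

/-- The essential domain of a function `u : ℝ² → ℝ ∪ {+∞}`. -/
def essDom (u : E2 → EReal) : Set E2 := {x | u x < ⊤}

/-- The domain of support `Ω_u`: the interior of the essential domain. -/
def suppDom (u : E2 → EReal) : Set E2 := interior (essDom u)

/-- The subdifferential of `u` at `x`. -/
def subdiff (u : E2 → EReal) (x : E2) : Set E2 :=
  {p | ∀ z : E2, u x + ((inner ℝ p (z - x) : ℝ) : EReal) ≤ u z}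

/-- The Monge–Ampère measure of `u` on a set `ω`. -/
def MAmeasure (u : E2 → EReal) (ω : Set E2) : ℝ≥0∞ :=
  volume (⋃ x ∈ ω, subdiff u x)

/-- `u` is gradient-surjective: the subdifferentials over Ω_u cover ℝ². -/
def GradientSurjective (u : E2 → EReal) : Prop :=
  ⋃ x ∈ suppDom u, subdiff u x = univ

/-- The convex envelope: pointwise sup of affine minorants. -/
def convEnv (φ : E2 → EReal) (x : E2) : EReal :=
  ⨆ ℓ ∈ {ℓ : E2 →ᵃ[ℝ] ℝ | ∀ y, (ℓ y : EReal) ≤ φ y}, ((ℓ x : ℝ) : EReal)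

/-- Ω_φ: the interior of the convex hull of the finiteness set of φ on S¹. -/
def OmegaPhi (φ : E2 → EReal) : Set E2 :=
  interior (convexHull ℝ {ξ ∈ S1 | φ ξ < ⊤})

/-- Convexity of an ℝ ∪ {+∞}-valued function, via convexity of the epigraph. -/
def IsConvexEReal (u : E2 → EReal) : Prop :=
  Convex ℝ {p : E2 × ℝ | u p.1 ≤ (p.2 : EReal)}

/-- Proper closed convex function with values in ℝ ∪ {+∞}. -/
def IsClosedProperConvex (u : E2 → EReal) : Prop :=
  (∃ x, u x ≠ ⊤) ∧ (∀ x, u x ≠ ⊥) ∧ LowerSemicontinuous u ∧ IsConvexEReal u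

/-- The Hessian determinant det D²f of a real function on ℝ². -/
def hessDet (f : E2 → ℝ) (z : E2) : ℝ :=
  Matrix.det (Matrix.of fun i j : Fin 2 =>
    fderiv ℝ (fun w => fderiv ℝ f w (EuclideanSpace.single i 1)) z (EuclideanSpace.single j 1))

/-- φ is admissible boundary data: φ : S¹ → ℝ ∪ {+∞} (extended by +∞ off S¹),
lower semicontinuous and finite at at least three distinct points. -/
def IsAdmissiblePhi (φ : E2 → EReal) : Prop :=
  (∀ x, x ∉ S1 → φ x = ⊤) ∧ (∀ x, φ x ≠ ⊥) ∧ LowerSemicontinuous φ ∧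
  ∃ ξ₁ ∈ S1, ∃ ξ₂ ∈ S1, ∃ ξ₃ ∈ S1,
    ξ₁ ≠ ξ₂ ∧ ξ₁ ≠ ξ₃ ∧ ξ₂ ≠ ξ₃ ∧ φ ξ₁ ≠ ⊤ ∧ φ ξ₂ ≠ ⊤ ∧ φ ξ₃ ≠ ⊤

/-- A solution of the Minkowski problem with data (φ, ψ). -/
def IsMinkowskiSolution (φ : E2 → EReal) (ψ : E2 → ℝ) (u : E2 → EReal) : Prop :=
  IsClosedProperConvex u ∧
  (∀ z, z ∉ OmegaPhi φ → u z = convEnv φ z) ∧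
  (∀ z ∈ OmegaPhi φ, u z ≠ ⊤) ∧
  ContDiffOn ℝ 2 (fun z => (u z).toReal) (OmegaPhi φ) ∧
  ∀ z ∈ OmegaPhi φ, hessDet (fun w => (u w).toReal) z
    = (1 / ψ z) * ((1 - ‖z‖ ^ 2) ^ 2)⁻¹


/-- The epigraph of a function ℝ² → ℝ ∪ {+∞}, as a subset of ℝ² × ℝ. -/
def epigraph (φ : E2 → EReal) : Set (E2 × ℝ) := {p | φ p.1 ≤ ((p.2 : ℝ) : EReal)}


section Aux

open Module Filter

lemma caratheodory_fin {V : Type} [NormedAddCommGroup V] [NormedSpace ℝ V]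
    [FiniteDimensional ℝ V] {s : Set V} (hs : s.Nonempty) {p : V}
    (hp : p ∈ convexHull ℝ s) :
    ∃ (w : Fin (finrank ℝ V + 1) → ℝ) (z : Fin (finrank ℝ V + 1) → V),
      (∀ i, 0 ≤ w i) ∧ (∑ i, w i = 1) ∧ (∀ i, z i ∈ s) ∧ (∑ i, w i • z i = p) := by
  obtain ⟨ι, hι, z, w, hzs, hai, hw0, hw1, hwz⟩ := eq_pos_convex_span_of_mem_convexHull hp
  have hcard : Fintype.card ι ≤ finrank ℝ V + 1 :=
    hai.card_le_finrank_succ.trans (by gcongr; exact Submodule.finrank_le _)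
  set N := finrank ℝ V + 1
  set k := Fintype.card ι with hk
  let e : Fin k ≃ ι := (Fintype.equivFin ι).symm
  classical
  have key : ∀ (M : Type) [AddCommMonoid M] (g : ι → M),
      (∑ i : Fin N, if h : (i : ℕ) < k then g (e ⟨i, h⟩) else 0) = ∑ i, g i := by
    intro M _ g
    rw [Fin.sum_univ_eq_sum_range (fun j => if h : j < k then g (e ⟨j, h⟩) else 0) N]
    rw [← Finset.sum_range_add_sum_Ico _ hcard]
    rw [Finset.sum_Ico_eq_sum_range]
    have h2 : ∀ j ∈ Finset.range (N - k), (if h : k + j < k then g (e ⟨k + j, h⟩) else 0) = 0 := by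
      intro j _; rw [dif_neg]; omega
    rw [Finset.sum_congr rfl h2, Finset.sum_const, smul_zero, add_zero]
    rw [← Fin.sum_univ_eq_sum_range (fun j => if h : j < k then g (e ⟨j, h⟩) else 0) k]
    rw [← e.sum_comp g]
    exact Finset.sum_congr rfl fun i _ => by rw [dif_pos i.isLt]
  refine ⟨fun i => if h : (i : ℕ) < k then w (e ⟨i, h⟩) else 0,
          fun i => if h : (i : ℕ) < k then z (e ⟨i, h⟩) else hs.choose, ?_, ?_, ?_, ?_⟩
  · intro i; dsimp only; split
    · exact (hw0 _).le
    · rfl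
  · rw [key ℝ w]; exact hw1
  · intro i; dsimp only; split
    · exact hzs ⟨_, rfl⟩
    · exact hs.choose_spec
  · have := key V (fun i => w i • z i)
    rw [← hwz, ← this]
    refine Finset.sum_congr rfl fun i _ => ?_
    dsimp only
    by_cases h : (i : ℕ) < k
    · rw [dif_pos h, dif_pos h, dif_pos h]
    · rw [dif_neg h, dif_neg h, dif_neg h, zero_smul]

lemma exists_lower_bound (φ : E2 → EReal) (hlsc : LowerSemicontinuous φ) (hbot : ∀ x, φ x ≠ ⊥)
    (hbdd : Bornology.IsBounded {x | φ x ≠ ⊤}) :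
    ∃ m : ℝ, ∀ x, (m : EReal) ≤ φ x := by
  classical
  have hD : IsCompact (closure {x | φ x ≠ ⊤}) := hbdd.isCompact_closure
  have hcover : closure {x | φ x ≠ ⊤} ⊆ ⋃ r : ℝ, {x | (r : EReal) < φ x} := by
    intro x _
    have h1 : (⊥ : EReal) < φ x := Ne.bot_lt (hbot x)
    obtain ⟨c, hc1, hc2⟩ := exists_between h1
    have hc3 : c ≠ ⊤ := ne_top_of_lt hc2
    have hc4 : ((c.toReal : ℝ) : EReal) = c := EReal.coe_toReal hc3 hc1.ne'
    refine mem_iUnion.2 ⟨c.toReal, ?_⟩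
    simpa [hc4] using hc2
  obtain ⟨t, ht⟩ := hD.elim_finite_subcover (fun r : ℝ => {x | (r : EReal) < φ x})
    (fun r => hlsc.isOpen_preimage r) hcover
  by_cases hte : t.Nonempty
  · refine ⟨t.min' hte, fun x => ?_⟩
    by_cases hx : φ x = ⊤
    · rw [hx]; exact le_top
    · have hxD : x ∈ closure {x | φ x ≠ ⊤} := subset_closure hx
      obtain ⟨r, hrt, hr⟩ := mem_iUnion₂.1 (ht hxD)
      exact le_of_lt (lt_of_le_of_lt (EReal.coe_le_coe_iff.2 (t.min'_le r hrt)) hr)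
  · refine ⟨0, fun x => ?_⟩
    by_cases hx : φ x = ⊤
    · rw [hx]; exact le_top
    · exact absurd (mem_iUnion₂.1 (ht (subset_closure hx))) (by simp [Finset.not_nonempty_iff_eq_empty.1 hte])

end Aux


section Closedness

open Module Filter

lemma isClosed_hull_epigraph (φ : E2 → EReal) (hlsc : LowerSemicontinuous φ) (hbot : ∀ x, φ x ≠ ⊥)
    (hne : ∃ x, φ x ≠ ⊤) (hbdd : Bornology.IsBounded {x | φ x ≠ ⊤}) :
    IsClosed (convexHull ℝ (epigraph φ)) := by
  classical
  obtain ⟨m, hm⟩ := exists_lower_bound φ hlsc hbot hbdd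
  have hD : IsCompact (closure {x | φ x ≠ ⊤}) := hbdd.isCompact_closure
  obtain ⟨x₁, hx₁⟩ := hne
  have hp₀ : (x₁, (φ x₁).toReal) ∈ epigraph φ := by
    simp only [epigraph, Set.mem_setOf_eq]
    rw [EReal.coe_toReal hx₁ (hbot x₁)]
  have hSne : (epigraph φ).Nonempty := ⟨_, hp₀⟩
  rw [← isSeqClosed_iff_isClosed]
  intro q p hq hqp
  choose w z hw0 hw1 hzS hsum using fun n => caratheodory_fin hSne (hq n)
  have hzS' : ∀ n i, φ (z n i).1 ≤ (((z n i).2 : ℝ) : EReal) := fun n i => hzS n i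
  have hdom : ∀ n i, (z n i).1 ∈ closure {x | φ x ≠ ⊤} := by
    intro n i
    refine subset_closure ?_
    have h := hzS' n i
    exact ne_top_of_le_ne_top (EReal.coe_ne_top _) h
  have hms : ∀ n i, m ≤ (z n i).2 := by
    intro n i
    have h1 : (m : EReal) ≤ (((z n i).2 : ℝ) : EReal) := le_trans (hm _) (hzS' n i)
    exact_mod_cast h1
  have hwle : ∀ n i, w n i ≤ 1 := by
    intro n i
    rw [← hw1 n]
    exact Finset.single_le_sum (fun j _ => hw0 n j) (Finset.mem_univ i)
  have hsnd : ∀ n, ∑ i, w n i * (z n i).2 = (q n).2 := by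
    intro n
    have h := congrArg Prod.snd (hsum n)
    simpa [Prod.snd_sum, Prod.smul_snd, smul_eq_mul] using h
  have hfst : ∀ n, ∑ i, w n i • (z n i).1 = (q n).1 := by
    intro n
    have h := congrArg Prod.fst (hsum n)
    simpa [Prod.fst_sum, Prod.smul_fst] using h
  set μ : ℝ := min m 0 with hμ
  have hμ0 : μ ≤ 0 := min_le_right _ _
  have hμm : μ ≤ m := min_le_left _ _
  have hlow : ∀ n i, μ ≤ w n i * (z n i).2 := by
    intro n i
    have h1 := hw0 n i; have h2 := hwle n i; have h3 := hms n i
    rcases le_total 0 ((z n i).2) with h | h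
    · exact le_trans hμ0 (mul_nonneg h1 h)
    · have h4 : (1:ℝ) * (z n i).2 ≤ w n i * (z n i).2 := mul_le_mul_of_nonpos_right h2 h
      nlinarith
  obtain ⟨B, hB⟩ := ((continuous_snd.tendsto p).comp hqp).bddAbove_range
  have hB' : ∀ n, (q n).2 ≤ B := fun n => hB ⟨n, rfl⟩
  have hup : ∀ n i, w n i * (z n i).2 ≤ B - ((finrank ℝ (E2 × ℝ) + 1 : ℕ) : ℝ) * μ := by
    intro n i
    have herase : (Finset.univ.erase i).card • μ ≤ ∑ j ∈ Finset.univ.erase i, w n j * (z n j).2 :=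
      Finset.card_nsmul_le_sum _ _ _ (fun j _ => hlow n j)
    have hcard : ((Finset.univ.erase i).card : ℝ) ≤ ((finrank ℝ (E2 × ℝ) + 1 : ℕ) : ℝ) := by
      have h : (Finset.univ.erase i).card ≤ finrank ℝ (E2 × ℝ) + 1 := le_trans (Finset.card_erase_le) (by simp)
      exact_mod_cast h
    have h5 : ((finrank ℝ (E2 × ℝ) + 1 : ℕ) : ℝ) * μ ≤ ((Finset.univ.erase i).card : ℝ) * μ :=
      mul_le_mul_of_nonpos_right hcard hμ0
    have h6 : w n i * (z n i).2 + ∑ j ∈ Finset.univ.erase i, w n j * (z n j).2 = (q n).2 := by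
      rw [← hsnd n]
      exact Finset.add_sum_erase _ (fun j => w n j * (z n j).2) (Finset.mem_univ i)
    have h7 := hB' n
    rw [nsmul_eq_mul] at herase
    linarith
  set D := closure {x | φ x ≠ ⊤} with hDdef
  set C : Set ((Fin (finrank ℝ (E2 × ℝ) + 1) → ℝ) × ((Fin (finrank ℝ (E2 × ℝ) + 1) → E2) × (Fin (finrank ℝ (E2 × ℝ) + 1) → ℝ))) :=
    (Set.pi Set.univ fun _ => Set.Icc (0:ℝ) 1) ×ˢ
      ((Set.pi Set.univ fun _ => D) ×ˢ (Set.pi Set.univ fun _ => Set.Icc μ (B - ((finrank ℝ (E2 × ℝ) + 1 : ℕ) : ℝ) * μ)))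
    with hC
  have hCcomp : IsCompact C :=
    (isCompact_univ_pi fun _ => isCompact_Icc).prod
      ((isCompact_univ_pi fun _ => hD).prod (isCompact_univ_pi fun _ => isCompact_Icc))
  set F : ℕ → ((Fin (finrank ℝ (E2 × ℝ) + 1) → ℝ) × ((Fin (finrank ℝ (E2 × ℝ) + 1) → E2) × (Fin (finrank ℝ (E2 × ℝ) + 1) → ℝ))) :=
    fun n => (fun i => w n i, (fun i => (z n i).1, fun i => w n i * (z n i).2)) with hF
  have hFC : ∀ n, F n ∈ C := by
    intro n
    exact ⟨fun i _ => ⟨hw0 n i, hwle n i⟩, fun i _ => hdom n i, fun i _ => ⟨hlow n i, hup n i⟩⟩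
  obtain ⟨⟨W, Y, Cc⟩, hLC, σ, hσ, hconv⟩ := hCcomp.tendsto_subseq hFC
  have hW01 : ∀ i, W i ∈ Set.Icc (0:ℝ) 1 := fun i => hLC.1 i (Set.mem_univ i)
  have hYD : ∀ i, Y i ∈ D := fun i => hLC.2.1 i (Set.mem_univ i)
  have hWt : ∀ i, Tendsto (fun n => w (σ n) i) atTop (𝓝 (W i)) := fun i =>
    (((continuous_apply i).comp continuous_fst).tendsto (W, Y, Cc)).comp hconv
  have hYt : ∀ i, Tendsto (fun n => (z (σ n) i).1) atTop (𝓝 (Y i)) := fun i =>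
    (((continuous_apply i).comp (continuous_fst.comp continuous_snd)).tendsto (W, Y, Cc)).comp hconv
  have hCt : ∀ i, Tendsto (fun n => w (σ n) i * (z (σ n) i).2) atTop (𝓝 (Cc i)) := fun i =>
    (((continuous_apply i).comp (continuous_snd.comp continuous_snd)).tendsto (W, Y, Cc)).comp hconv
  have hqσ : Tendsto (fun n => q (σ n)) atTop (𝓝 p) := hqp.comp hσ.tendsto_atTop
  have hW1 : ∑ i, W i = 1 := by
    have h1 : Tendsto (fun n => ∑ i, w (σ n) i) atTop (𝓝 (∑ i, W i)) :=
      tendsto_finset_sum _ fun i _ => hWt i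
    have h2 : (fun n => ∑ i, w (σ n) i) = fun _ => 1 := funext fun n => hw1 (σ n)
    rw [h2] at h1
    exact tendsto_nhds_unique h1 tendsto_const_nhds
  have hxeq : ∑ i, W i • Y i = p.1 := by
    have h1 : Tendsto (fun n => ∑ i, w (σ n) i • (z (σ n) i).1) atTop (𝓝 (∑ i, W i • Y i)) :=
      tendsto_finset_sum _ fun i _ => (hWt i).smul (hYt i)
    have h2 : (fun n => ∑ i, w (σ n) i • (z (σ n) i).1) = fun n => (q (σ n)).1 :=
      funext fun n => hfst (σ n)
    rw [h2] at h1
    exact tendsto_nhds_unique h1 ((continuous_fst.tendsto p).comp hqσ)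
  have hteq : ∑ i, Cc i = p.2 := by
    have h1 : Tendsto (fun n => ∑ i, w (σ n) i * (z (σ n) i).2) atTop (𝓝 (∑ i, Cc i)) :=
      tendsto_finset_sum _ fun i _ => hCt i
    have h2 : (fun n => ∑ i, w (σ n) i * (z (σ n) i).2) = fun n => (q (σ n)).2 :=
      funext fun n => hsnd (σ n)
    rw [h2] at h1
    exact tendsto_nhds_unique h1 ((continuous_snd.tendsto p).comp hqσ)
  have hSle : ∀ i, W i ≠ 0 → φ (Y i) ≤ ((Cc i / W i : ℝ) : EReal) := by
    intro i hWi
    have hst : Tendsto (fun n => (z (σ n) i).2) atTop (𝓝 (Cc i / W i)) := by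
      have h3 := (hCt i).div (hWt i) hWi
      refine Filter.Tendsto.congr' ?_ h3
      filter_upwards [(hWt i).eventually_ne hWi] with n hn
      exact mul_div_cancel_left₀ _ hn
    by_contra hcon
    push_neg at hcon
    obtain ⟨c, hc1, hc2⟩ := exists_between hcon
    have hc3 : ((c.toReal : ℝ) : EReal) = c := EReal.coe_toReal (ne_top_of_lt hc2) (ne_bot_of_gt hc1)
    have hev : ∀ᶠ n in atTop, c < φ ((z (σ n) i).1) := (hYt i).eventually (hlsc (Y i) c hc2)
    have hev2 : ∀ᶠ n in atTop, c.toReal ≤ (z (σ n) i).2 := by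
      filter_upwards [hev] with n hn
      have h4 : c ≤ (((z (σ n) i).2 : ℝ) : EReal) := le_trans hn.le (hzS' (σ n) i)
      rw [← hc3] at h4
      exact_mod_cast h4
    have h4 : c.toReal ≤ Cc i / W i := ge_of_tendsto hst hev2
    have h5 : (Cc i / W i : ℝ) < c.toReal := by
      have h6 := hc1; rw [← hc3] at h6; exact_mod_cast h6
    linarith
  have hC0 : ∀ i, W i = 0 → 0 ≤ Cc i := by
    intro i hWi
    have h1 : Tendsto (fun n => w (σ n) i * m) atTop (𝓝 0) := by
      have h2 := (hWt i).mul_const m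
      rwa [hWi, zero_mul] at h2
    refine le_of_tendsto_of_tendsto' h1 (hCt i) ?_
    intro n
    exact mul_le_mul_of_nonneg_left (hms (σ n) i) (hw0 (σ n) i)
  set T : Finset (Fin (finrank ℝ (E2 × ℝ) + 1)) := Finset.univ.filter (fun i => W i ≠ 0) with hT
  have hT1 : ∑ i ∈ T, W i = 1 := by
    rw [hT, Finset.sum_filter_ne_zero]; exact hW1
  have hTne : T.Nonempty := by
    rw [Finset.nonempty_iff_ne_empty]
    intro h
    rw [h, Finset.sum_empty] at hT1
    exact one_ne_zero hT1.symm
  obtain ⟨i₀, hi₀⟩ := hTne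
  have hWne : ∀ i ∈ T, W i ≠ 0 := fun i hi => (Finset.mem_filter.1 hi).2
  set e : ℝ := p.2 - ∑ i ∈ T, Cc i with he
  have he0 : 0 ≤ e := by
    have hsplit : ∑ i ∈ T, Cc i + ∑ i ∈ Finset.univ.filter (fun i => ¬ W i ≠ 0), Cc i
        = ∑ i, Cc i := Finset.sum_filter_add_sum_filter_not _ _ _
    have hpos : 0 ≤ ∑ i ∈ Finset.univ.filter (fun i => ¬ W i ≠ 0), Cc i :=
      Finset.sum_nonneg fun i hi => hC0 i (not_not.1 (Finset.mem_filter.1 hi).2)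
    rw [he, ← hteq, ← hsplit]
    linarith
  set Z : Fin (finrank ℝ (E2 × ℝ) + 1) → E2 × ℝ := fun i => (Y i, Cc i / W i + if i = i₀ then e / W i₀ else 0) with hZ
  have hW0' : ∀ i ∈ T, 0 ≤ W i := fun i _ => (hW01 i).1
  have hZS : ∀ i ∈ T, Z i ∈ epigraph φ := by
    intro i hi
    have h1 : φ (Y i) ≤ ((Cc i / W i : ℝ) : EReal) := hSle i (hWne i hi)
    have h2 : (0:ℝ) ≤ (if i = i₀ then e / W i₀ else 0) := by
      split
      · exact div_nonneg he0 (lt_of_le_of_ne (hW01 i₀).1 (Ne.symm (hWne i₀ hi₀))).le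
      · exact le_refl 0
    have h3 : (Cc i / W i : ℝ) ≤ Cc i / W i + (if i = i₀ then e / W i₀ else 0) :=
      le_add_of_nonneg_right h2
    exact le_trans h1 (EReal.coe_le_coe_iff.2 h3)
  have hZsum : ∑ i ∈ T, W i • Z i = p := by
    have hfst' : (∑ i ∈ T, W i • Z i).1 = p.1 := by
      rw [Prod.fst_sum]
      simp only [Prod.smul_fst]
      rw [← hxeq]
      refine Finset.sum_subset (Finset.subset_univ T) ?_
      intro i _ hiT
      have hWi : W i = 0 := by
        by_contra h
        exact hiT (Finset.mem_filter.2 ⟨Finset.mem_univ i, h⟩)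
      rw [hWi, zero_smul]
    have hsnd' : (∑ i ∈ T, W i • Z i).2 = p.2 := by
      rw [Prod.snd_sum]
      simp only [Prod.smul_snd, smul_eq_mul]
      have hterm : ∀ i ∈ T, W i * (Cc i / W i + if i = i₀ then e / W i₀ else 0)
          = Cc i + (if i = i₀ then W i * (e / W i₀) else 0) := by
        intro i hi
        rw [mul_add, mul_comm (W i) (Cc i / W i), div_mul_cancel₀ _ (hWne i hi), mul_ite, mul_zero]
      rw [Finset.sum_congr rfl hterm, Finset.sum_add_distrib, Finset.sum_ite_eq' T i₀, if_pos hi₀]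
      rw [← mul_div_assoc, mul_div_cancel_left₀ _ (hWne i₀ hi₀)]
      rw [he]; ring
    exact Prod.ext hfst' hsnd'
  rw [← hZsum]
  exact (convex_convexHull ℝ (epigraph φ)).sum_mem hW0' hT1
    (fun i hi => subset_convexHull ℝ _ (hZS i hi))

end Closedness

set_option maxHeartbeats 1000000 in
/-- for φ lower semicontinuous, not identically +∞ and with bounded
essential domain, the convex hull of the epigraph of φ is closed; equivalently it
equals the epigraph of the convex envelope conv(φ). -/
theorem convexHull_epigraph_closed
    (φ : E2 → EReal) (hlsc : LowerSemicontinuous φ) (hbot : ∀ x, φ x ≠ ⊥)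
    (hne : ∃ x, φ x ≠ ⊤) (hbdd : Bornology.IsBounded {x | φ x ≠ ⊤}) :
    IsClosed (convexHull ℝ (epigraph φ)) ∧
    epigraph (convEnv φ) = convexHull ℝ (epigraph φ) := by
  classical
  have hclosed := isClosed_hull_epigraph φ hlsc hbot hne hbdd
  refine ⟨hclosed, ?_⟩
  obtain ⟨m, hm⟩ := exists_lower_bound φ hlsc hbot hbdd
  obtain ⟨x₁, hx₁⟩ := hne
  have hiff : ∀ (x : E2) (t : ℝ), convEnv φ x ≤ (t : EReal) ↔
      ∀ ℓ : E2 →ᵃ[ℝ] ℝ, (∀ y, ((ℓ y : ℝ) : EReal) ≤ φ y) → ℓ x ≤ t := by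
    intro x t
    rw [convEnv, iSup₂_le_iff]
    constructor
    · intro h ℓ hℓ; exact EReal.coe_le_coe_iff.1 (h ℓ hℓ)
    · intro h ℓ hℓ; exact EReal.coe_le_coe_iff.2 (h ℓ hℓ)
  have hsub : epigraph φ ⊆ epigraph (convEnv φ) := by
    intro p hp
    have hp' : φ p.1 ≤ ((p.2 : ℝ) : EReal) := hp
    show convEnv φ p.1 ≤ ((p.2 : ℝ) : EReal)
    rw [hiff]
    intro ℓ hℓ
    exact EReal.coe_le_coe_iff.1 (le_trans (hℓ p.1) hp')
  have hconv : Convex ℝ (epigraph (convEnv φ)) := by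
    rintro p hp q hq a b ha hb hab
    have hp' : convEnv φ p.1 ≤ ((p.2 : ℝ) : EReal) := hp
    have hq' : convEnv φ q.1 ≤ ((q.2 : ℝ) : EReal) := hq
    show convEnv φ (a • p + b • q).1 ≤ (((a • p + b • q).2 : ℝ) : EReal)
    rw [hiff]
    intro ℓ hℓ
    have h1 : ℓ (a • p.1 + b • q.1) = a • ℓ p.1 + b • ℓ q.1 := Convex.combo_affine_apply hab
    have h2 : ℓ p.1 ≤ p.2 := (hiff p.1 p.2).1 hp' ℓ hℓ
    have h3 : ℓ q.1 ≤ q.2 := (hiff q.1 q.2).1 hq' ℓ hℓ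
    have h4 : (a • p + b • q).1 = a • p.1 + b • q.1 := rfl
    have h5 : (a • p + b • q).2 = a * p.2 + b * q.2 := rfl
    rw [h4, h5, h1]
    simp only [smul_eq_mul]
    have := mul_le_mul_of_nonneg_left h2 ha
    have := mul_le_mul_of_nonneg_left h3 hb
    linarith
  refine Set.Subset.antisymm ?_ (convexHull_min hsub hconv)
  intro p hp
  by_contra hout
  obtain ⟨f, u, hfu, hup⟩ :=
    geometric_hahn_banach_closed_point (convex_convexHull ℝ (epigraph φ)) hclosed hout
  set g : E2 →L[ℝ] ℝ := f.comp (ContinuousLinearMap.inl ℝ E2 ℝ) with hg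
  have hgx : ∀ x : E2, g x = f (x, 0) := fun x => rfl
  have hlin : ∀ (x : E2) (t : ℝ), f (x, t) = g x + t * f (0, 1) := by
    intro x t
    have h1 : ((x, t) : E2 × ℝ) = (x, 0) + t • ((0 : E2), (1 : ℝ)) := by
      simp [Prod.ext_iff]
    rw [h1, map_add, f.map_smul, hgx, smul_eq_mul]
  set β : ℝ := f (0, 1) with hβdef
  have hepi : ∀ (x : E2) (t : ℝ), φ x ≤ (t : EReal) → g x + t * β < u := by
    intro x t hxt
    have h0 := hfu (x, t) (subset_convexHull ℝ (epigraph φ) (show (x, t) ∈ epigraph φ from hxt))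
    rwa [hlin x t] at h0
  have hcoe : ∀ x : E2, φ x ≠ ⊤ → φ x = (((φ x).toReal : ℝ) : EReal) :=
    fun x hx => (EReal.coe_toReal hx (hbot x)).symm
  have hφmem : ∀ (x : E2), φ x ≠ ⊤ → ∀ t : ℝ, (φ x).toReal ≤ t → φ x ≤ (t : EReal) := by
    intro x hx t ht
    rw [hcoe x hx]
    exact_mod_cast ht
  have hβ : β ≤ 0 := by
    by_contra hβpos
    push_neg at hβpos
    set t : ℝ := max ((φ x₁).toReal) ((u - g x₁ + 1) / β) with htdef
    have h1 : φ x₁ ≤ (t : EReal) := hφmem x₁ hx₁ t (le_max_left _ _)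
    have h2 := hepi x₁ t h1
    have h3 : (u - g x₁ + 1) / β ≤ t := le_max_right _ _
    have h4 : u - g x₁ + 1 ≤ t * β := by
      rw [div_le_iff₀ hβpos] at h3; linarith
    linarith
  have hple : ∀ ℓ : E2 →ᵃ[ℝ] ℝ, (∀ y, ((ℓ y : ℝ) : EReal) ≤ φ y) → ℓ p.1 ≤ p.2 :=
    (hiff p.1 p.2).1 hp
  rcases lt_or_eq_of_le hβ with hβneg | hβzero
  · -- β < 0
    have hβne : -β > 0 := by linarith
    set ℓ : E2 →ᵃ[ℝ] ℝ := AffineMap.mk' (fun x => (g x - u) / (-β))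
      ((-β)⁻¹ • (g : E2 →L[ℝ] ℝ).toLinearMap) 0 (by
        intro x
        simp only [LinearMap.smul_apply, ContinuousLinearMap.coe_coe, vsub_eq_sub, sub_zero,
          vadd_eq_add, map_zero, smul_eq_mul]
        have hb : β ≠ 0 := ne_of_lt hβneg
        field_simp
        ring) with hℓdef
    have hℓx : ∀ x, ℓ x = (g x - u) / (-β) := fun x => rfl
    have hℓmin : ∀ y, ((ℓ y : ℝ) : EReal) ≤ φ y := by
      intro y
      by_cases hy : φ y = ⊤
      · rw [hy]; exact le_top
      · have h1 := hepi y ((φ y).toReal) (hφmem y hy _ le_rfl)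
        have h2 : ℓ y ≤ (φ y).toReal := by
          rw [hℓx, div_le_iff₀ hβne]
          nlinarith
        rw [hcoe y hy]
        exact_mod_cast h2
    have h3 : ℓ p.1 ≤ p.2 := hple ℓ hℓmin
    have h4 : u < g p.1 + p.2 * β := by rw [← hlin]; exact hup
    have h5 : p.2 < ℓ p.1 := by
      rw [hℓx, lt_div_iff₀ hβne]
      nlinarith
    linarith
  · -- β = 0
    have hβ0 : β = 0 := hβzero
    have hgu : ∀ (x : E2), φ x ≠ ⊤ → g x < u := by
      intro x hx
      have := hepi x ((φ x).toReal) (hφmem x hx _ le_rfl)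
      rw [hβ0] at this; linarith
    have hδ : 0 < g p.1 - u := by
      have h4 : u < g p.1 + p.2 * β := by rw [← hlin]; exact hup
      rw [hβ0] at h4; linarith
    set δ : ℝ := g p.1 - u with hδdef
    set n : ℝ := max 1 ((p.2 - m + 1) / δ) with hndef
    have hn0 : 0 < n := lt_of_lt_of_le one_pos (le_max_left _ _)
    set ℓ : E2 →ᵃ[ℝ] ℝ := AffineMap.mk' (fun x => m + n * (g x - u))
      (n • (g : E2 →L[ℝ] ℝ).toLinearMap) 0 (by
        intro x
        simp only [LinearMap.smul_apply, ContinuousLinearMap.coe_coe, vsub_eq_sub, sub_zero,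
          vadd_eq_add, map_zero, smul_eq_mul]
        ring) with hℓdef
    have hℓx : ∀ x, ℓ x = m + n * (g x - u) := fun x => rfl
    have hℓmin : ∀ y, ((ℓ y : ℝ) : EReal) ≤ φ y := by
      intro y
      by_cases hy : φ y = ⊤
      · rw [hy]; exact le_top
      · have h1 := hgu y hy
        have h2 : ℓ y ≤ m := by
          rw [hℓx]
          nlinarith
        calc ((ℓ y : ℝ) : EReal) ≤ ((m : ℝ) : EReal) := EReal.coe_le_coe_iff.2 h2
          _ ≤ φ y := hm y
    have h3 : ℓ p.1 ≤ p.2 := hple ℓ hℓmin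
    have h5 : p.2 < ℓ p.1 := by
      rw [hℓx]
      have h6 : (p.2 - m + 1) / δ ≤ n := le_max_right _ _
      rw [div_le_iff₀ hδ] at h6
      nlinarith
    linarith


end
end

section
/- Let f : ℝ² → ℝ be C¹ with ‖∇f(x)‖ < 1 for every x ∈ ℝ², let Σ be its graph, and let D_Σ be its domain of dependence. Then exactly one of the following holds: (1) D_Σ = ℝ³; (2) there exist ξ ∈ S¹ and real numbers c' < c with D_Σ = {x ∈ ℝ³ : c' < x₁ξ₁ + x₂ξ₂ − x₃ < c} (the region between two parallel null planes); (3) there is a nonempty family F ⊆ S¹ × ℝ with D_Σ = ⋂_{(ξ,c) ∈ F} {x ∈ ℝ³ : x₁ξ₁ + x₂ξ₂ − x₃ < c} (an intersection of futures of null planes); (4) there is a nonempty family F ⊆ S¹ × ℝ with D_Σ = ⋂_{(ξ,c) ∈ F} {x ∈ ℝ³ : x₁ξ₁ + x₂ξ₂ − x₃ > c} (an intersection of pasts of null planes). -/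
open Set MeasureTheory
open scoped Topology ENNReal

noncomputable section

/-- Minkowski 3-space ℝ^{2,1}, identified with ℝ² × ℝ. -/
abbrev M3 := E2 × ℝ


section DodAux
open Filter Topology

lemma my_lip (f : E2 → ℝ) (hf : ContDiff ℝ 1 f) (hgrad : ∀ x : E2, ‖fderiv ℝ f x‖ < 1) :
    LipschitzWith 1 f := by
  apply lipschitzWith_of_nnnorm_fderiv_le (hf.differentiable one_ne_zero)
  intro x
  rw [← NNReal.coe_le_coe]
  exact (hgrad x).le

/-- no critical point of x ↦ ⟨x,ξ⟩ - f x -/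
lemma no_crit (f : E2 → ℝ) (hf : ContDiff ℝ 1 f) (hgrad : ∀ x : E2, ‖fderiv ℝ f x‖ < 1)
    (ξ : E2) (hξ : ‖ξ‖ = 1) (x₀ : E2) :
    fderiv ℝ (fun x => (inner ℝ x ξ : ℝ) - f x) x₀ ≠ 0 := by
  have h1 : (fun x : E2 => (inner ℝ x ξ : ℝ)) = ⇑(innerSL ℝ ξ) := by
    funext x; rw [innerSL_apply_apply]; exact (real_inner_comm ξ x)
  have hd : HasFDerivAt (fun x => (inner ℝ x ξ : ℝ) - f x)
      (innerSL ℝ ξ - fderiv ℝ f x₀) x₀ := by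
    refine HasFDerivAt.sub ?_ (hf.differentiable one_ne_zero x₀).hasFDerivAt
    rw [h1]; exact (innerSL ℝ ξ).hasFDerivAt
  rw [hd.fderiv]
  intro h
  have : innerSL ℝ ξ = fderiv ℝ f x₀ := by
    have := sub_eq_zero.mp h; exact this
  have hn : ‖innerSL ℝ ξ‖ = 1 := by rw [innerSL_apply_norm]; exact hξ
  rw [this] at hn
  exact absurd hn (ne_of_lt (hgrad x₀))

/-- the straight null line as curve -/
lemma line_lip (p₁ : E2) (p₂ : ℝ) (ξ : E2) (hξ : ‖ξ‖ = 1) :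
    LipschitzWith 1 (fun t : ℝ => p₁ + (t - p₂) • ξ) := by
  apply LipschitzWith.of_dist_le_mul
  intro s t
  simp only [dist_eq_norm]
  have : p₁ + (s - p₂) • ξ - (p₁ + (t - p₂) • ξ) = (s - t) • ξ := by
    rw [sub_smul, sub_smul]; module
  rw [this, norm_smul, hξ]
  simp [Real.norm_eq_abs]

lemma easyUB (f : E2 → ℝ) (hf : ContDiff ℝ 1 f) (hgrad : ∀ x : E2, ‖fderiv ℝ f x‖ < 1)
    (ξ : E2) (hξ : ‖ξ‖ = 1) (M : ℝ) (hub : ∀ x : E2, (inner ℝ x ξ : ℝ) - f x ≤ M)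
    (p : M3) (hp : ∀ c : ℝ → E2, LipschitzWith 1 c → c p.2 = p.1 → ∃ t : ℝ, f (c t) = t) :
    (inner ℝ p.1 ξ : ℝ) - p.2 < M := by
  set c : ℝ → E2 := fun t => p.1 + (t - p.2) • ξ with hc
  obtain ⟨t₀, ht₀⟩ := hp c (line_lip p.1 p.2 ξ hξ) (by simp [hc])
  have hval : (inner ℝ (c t₀) ξ : ℝ) - f (c t₀) = (inner ℝ p.1 ξ : ℝ) - p.2 := by
    rw [ht₀]
    simp only [hc, inner_add_left, inner_smul_left]
    have : (inner ℝ ξ ξ : ℝ) = 1 := by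
      have := real_inner_self_eq_norm_sq ξ; rw [hξ] at this; simpa using this
    rw [this]; simp [starRingEnd_apply]; ring
  rcases lt_or_eq_of_le (hub (c t₀)) with h | h
  · rwa [hval] at h
  · exfalso
    -- max attained at c t₀
    have hmax : IsLocalMax (fun x => (inner ℝ x ξ : ℝ) - f x) (c t₀) := by
      apply IsMaxOn.isLocalMax (s := univ) _ univ_mem
      intro x _
      simp only [mem_setOf_eq]
      rw [h]; exact hub x
    exact no_crit f hf hgrad ξ hξ (c t₀) hmax.fderiv_eq_zero

lemma easyLB (f : E2 → ℝ) (hf : ContDiff ℝ 1 f) (hgrad : ∀ x : E2, ‖fderiv ℝ f x‖ < 1)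
    (ξ : E2) (hξ : ‖ξ‖ = 1) (m : ℝ) (hlb : ∀ x : E2, m ≤ (inner ℝ x ξ : ℝ) - f x)
    (p : M3) (hp : ∀ c : ℝ → E2, LipschitzWith 1 c → c p.2 = p.1 → ∃ t : ℝ, f (c t) = t) :
    m < (inner ℝ p.1 ξ : ℝ) - p.2 := by
  set c : ℝ → E2 := fun t => p.1 + (t - p.2) • ξ with hc
  obtain ⟨t₀, ht₀⟩ := hp c (line_lip p.1 p.2 ξ hξ) (by simp [hc])
  have hval : (inner ℝ (c t₀) ξ : ℝ) - f (c t₀) = (inner ℝ p.1 ξ : ℝ) - p.2 := by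
    rw [ht₀]
    simp only [hc, inner_add_left, inner_smul_left]
    have : (inner ℝ ξ ξ : ℝ) = 1 := by
      have := real_inner_self_eq_norm_sq ξ; rw [hξ] at this; simpa using this
    rw [this]; simp [starRingEnd_apply]; ring
  rcases lt_or_eq_of_le (hlb (c t₀)) with h | h
  · rwa [hval] at h
  · exfalso
    have hmin : IsLocalMin (fun x => (inner ℝ x ξ : ℝ) - f x) (c t₀) := by
      apply IsMinOn.isLocalMin (s := univ) _ univ_mem
      intro x _
      simp only [mem_setOf_eq]
      rw [← h]; exact hlb x
    exact no_crit f hf hgrad ξ hξ (c t₀) hmin.fderiv_eq_zero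

/-- quantitative triangle-type estimate -/
lemma normbound (v ξ : E2) (R : ℝ) (hξ : ‖ξ‖ = 1) (hR : ‖v‖ < R) :
    ‖v + R • ξ‖ ≤ R + (inner ℝ v ξ : ℝ) + ‖v‖ ^ 2 / (2 * (R - ‖v‖)) := by
  set a : ℝ := inner ℝ v ξ with ha
  set b : ℝ := ‖v‖ with hb
  have hb0 : 0 ≤ b := norm_nonneg v
  have hab : |a| ≤ b := by
    calc |a| ≤ ‖v‖ * ‖ξ‖ := abs_real_inner_le_norm v ξ
    _ = b := by rw [hξ]; ring
  have hRb : 0 < R - b := by linarith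
  set d : ℝ := b ^ 2 / (2 * (R - b)) with hd
  have hd0 : 0 ≤ d := by positivity
  have hdRb : 2 * d * (R - b) = b ^ 2 := by
    rw [hd, mul_comm 2, mul_assoc, div_mul_cancel₀ _ (mul_pos two_pos hRb).ne']
  have hsq : ‖v + R • ξ‖ ^ 2 = b ^ 2 + 2 * R * a + R ^ 2 := by
    rw [norm_add_sq_real, real_inner_smul_right, norm_smul]
    have hR0 : 0 ≤ R := le_trans hb0 hR.le
    rw [Real.norm_eq_abs, abs_of_nonneg hR0, hξ]
    ring
  have hRHS0 : 0 ≤ R + a + d := by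
    have : -b ≤ a := neg_le_of_abs_le hab
    linarith
  have hsqle : ‖v + R • ξ‖ ^ 2 ≤ (R + a + d) ^ 2 := by
    rw [hsq]
    have h1 : -b ≤ a := neg_le_of_abs_le hab
    nlinarith [sq_nonneg a, sq_nonneg d, hd0, hdRb]
  nlinarith [norm_nonneg (v + R • ξ), hRHS0, hsqle]

/-- The hard direction: a causal curve staying strictly above the graph produces
a null supporting plane from above. -/
lemma hard (f : E2 → ℝ) (hf : LipschitzWith 1 f) (c : ℝ → E2) (hc : LipschitzWith 1 c)
    (p₁ : E2) (p₂ : ℝ) (hcp : c p₂ = p₁) (hab : ∀ t : ℝ, f (c t) < t) :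
    ∃ ξ : E2, ‖ξ‖ = 1 ∧ ∀ x : E2, f x ≤ (inner ℝ (x - p₁) ξ : ℝ) + p₂ := by
  have hfd : ∀ a b : E2, f a - f b ≤ ‖a - b‖ := by
    intro a b
    have := hf.dist_le_mul a b
    rw [dist_eq_norm, dist_eq_norm, NNReal.coe_one, one_mul] at this
    calc f a - f b ≤ ‖f a - f b‖ := le_abs_self _
    _ ≤ ‖a - b‖ := this
  -- times going to past infinity
  set t : ℕ → ℝ := fun n => min p₂ (f p₁ - (n + 1)) with htdef
  have htle : ∀ n, t n ≤ p₂ := fun n => min_le_left _ _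
  have htle2 : ∀ n : ℕ, t n ≤ f p₁ - (n + 1) := fun n => min_le_right _ _
  set w : ℕ → E2 := fun n => p₁ - c (t n) with hwdef
  set R : ℕ → ℝ := fun n => ‖w n‖ with hRdef
  have hRlb : ∀ n : ℕ, (n : ℝ) + 1 ≤ R n := by
    intro n
    have h1 : f p₁ - f (c (t n)) ≤ R n := hfd p₁ (c (t n))
    have h2 : f (c (t n)) < t n := hab (t n)
    have h3 := htle2 n
    linarith
  have hRpos : ∀ n, 0 < R n := by
    intro n
    have := hRlb n
    have : (0:ℝ) ≤ (n:ℝ) := Nat.cast_nonneg n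
    linarith [hRlb n]
  have hRub : ∀ n, R n ≤ p₂ - t n := by
    intro n
    have h := hc.dist_le_mul p₂ (t n)
    rw [NNReal.coe_one, one_mul, Real.dist_eq, abs_of_nonneg (by linarith [htle n])] at h
    calc R n = dist (c p₂) (c (t n)) := by rw [hRdef, hwdef, dist_eq_norm, hcp]
    _ ≤ p₂ - t n := h
  set ξs : ℕ → E2 := fun n => (R n)⁻¹ • w n with hxidef
  have hξnorm : ∀ n, ‖ξs n‖ = 1 := by
    intro n
    rw [hxidef]
    simp only [norm_smul, Real.norm_eq_abs, abs_of_pos (inv_pos.mpr (hRpos n))]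
    exact inv_mul_cancel₀ (hRpos n).ne'
  have hξmem : ∀ n, ξs n ∈ Metric.sphere (0 : E2) 1 := by
    intro n
    rw [mem_sphere_zero_iff_norm]
    exact hξnorm n
  have hw : ∀ n, w n = R n • ξs n := by
    intro n
    rw [hxidef, smul_smul, mul_inv_cancel₀ (hRpos n).ne', one_smul]
  obtain ⟨ξ, hξS, φ, hφmono, hφtend⟩ := (isCompact_sphere (0 : E2) 1).tendsto_subseq hξmem
  have hξ1 : ‖ξ‖ = 1 := mem_sphere_zero_iff_norm.mp hξS
  refine ⟨ξ, hξ1, ?_⟩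
  intro x
  set b : ℝ := ‖x - p₁‖ with hbdef
  have key : ∀ n, b < R n →
      f x ≤ p₂ + (inner ℝ (x - p₁) (ξs n) : ℝ) + b ^ 2 / (2 * (R n - b)) := by
    intro n hbn
    have h1 : f x - f (c (t n)) ≤ ‖x - c (t n)‖ := hfd _ _
    have h2 : x - c (t n) = (x - p₁) + R n • ξs n := by
      rw [← hw, hwdef]
      exact (sub_add_sub_cancel x p₁ (c (t n))).symm
    have h3 : ‖x - c (t n)‖ ≤ R n + (inner ℝ (x - p₁) (ξs n) : ℝ) + b ^ 2 / (2 * (R n - b)) := by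
      rw [h2]
      exact normbound _ _ _ (hξnorm n) hbn
    have h4 : f (c (t n)) < t n := hab _
    have h5 : R n ≤ p₂ - t n := hRub n
    linarith
  have hRφ : ∀ k : ℕ, (k : ℝ) + 1 ≤ R (φ k) := by
    intro k
    have h1 : (k : ℝ) ≤ (φ k : ℝ) := by exact_mod_cast hφmono.le_apply
    linarith [hRlb (φ k)]
  have hev : ∀ᶠ k in atTop,
      f x ≤ p₂ + (inner ℝ (x - p₁) (ξs (φ k)) : ℝ) + b ^ 2 / (2 * (R (φ k) - b)) := by
    filter_upwards [eventually_ge_atTop ⌈b⌉₊] with k hk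
    apply key
    have h1 : b ≤ (k : ℝ) := (Nat.le_ceil b).trans (by exact_mod_cast hk)
    linarith [hRφ k]
  have ht1 : Tendsto (fun k => (inner ℝ (x - p₁) (ξs (φ k)) : ℝ)) atTop
      (𝓝 (inner ℝ (x - p₁) ξ : ℝ)) := by
    have hcont : Continuous fun y : E2 => (inner ℝ (x - p₁) y : ℝ) :=
      Continuous.inner continuous_const continuous_id
    exact (hcont.continuousAt.tendsto).comp hφtend
  have hRt : Tendsto (fun k => R (φ k)) atTop atTop := by
    apply tendsto_atTop_mono hRφ
    exact tendsto_atTop_add_const_right _ 1 tendsto_natCast_atTop_atTop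
  have ht2 : Tendsto (fun k => b ^ 2 / (2 * (R (φ k) - b))) atTop (𝓝 0) := by
    apply Tendsto.div_atTop tendsto_const_nhds
    have h1 : Tendsto (fun k => R (φ k) - b) atTop atTop :=
      tendsto_atTop_add_const_right _ (-b) hRt
    exact h1.const_mul_atTop (by norm_num : (0:ℝ) < 2)
  have htot : Tendsto (fun k => p₂ + (inner ℝ (x - p₁) (ξs (φ k)) : ℝ)
      + b ^ 2 / (2 * (R (φ k) - b))) atTop (𝓝 ((inner ℝ (x - p₁) ξ : ℝ) + p₂)) := by
    have h0 := (Tendsto.const_add p₂ ht1).add ht2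
    rw [add_zero] at h0
    have : p₂ + (inner ℝ (x - p₁) ξ : ℝ) = (inner ℝ (x - p₁) ξ : ℝ) + p₂ := add_comm _ _
    rwa [this] at h0
  exact ge_of_tendsto htot hev

lemma hard' (f : E2 → ℝ) (hf : LipschitzWith 1 f) (c : ℝ → E2) (hc : LipschitzWith 1 c)
    (p₁ : E2) (p₂ : ℝ) (hcp : c p₂ = p₁) (hab : ∀ t : ℝ, t < f (c t)) :
    ∃ ξ : E2, ‖ξ‖ = 1 ∧ ∀ x : E2, (inner ℝ (x - p₁) ξ : ℝ) + p₂ ≤ f x := by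
  have hf' : LipschitzWith 1 (fun x : E2 => -f (-x)) := by
    apply LipschitzWith.of_dist_le_mul
    intro a b
    rw [NNReal.coe_one, one_mul]
    calc dist (-f (-a)) (-f (-b)) = dist (f (-a)) (f (-b)) := dist_neg_neg _ _
    _ ≤ 1 * dist (-a) (-b) := hf.dist_le_mul _ _
    _ = dist a b := by rw [one_mul, dist_neg_neg]
  have hc' : LipschitzWith 1 (fun t : ℝ => -c (-t)) := by
    apply LipschitzWith.of_dist_le_mul
    intro a b
    rw [NNReal.coe_one, one_mul]
    calc dist (-c (-a)) (-c (-b)) = dist (c (-a)) (c (-b)) := dist_neg_neg _ _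
    _ ≤ 1 * dist (-a) (-b) := hc.dist_le_mul _ _
    _ = dist a b := by rw [one_mul, dist_neg_neg]
  obtain ⟨ξ, hξ, h⟩ := hard (fun x => -f (-x)) hf' (fun t => -c (-t)) hc' (-p₁) (-p₂)
    (by simp [hcp]) (by intro t; simpa using neg_lt_neg (hab (-t)))
  refine ⟨ξ, hξ, ?_⟩
  intro y
  have := h (-y)
  simp only [neg_sub_neg, neg_neg] at this
  have h2 : (inner ℝ (p₁ - y) ξ : ℝ) = -(inner ℝ (y - p₁) ξ : ℝ) := by
    rw [← inner_neg_left]; congr 1; abel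
  rw [h2] at this
  linarith

/-- If some causal curve through p misses the graph, there is a null support plane. -/
lemma notDD (f : E2 → ℝ) (hf : LipschitzWith 1 f) (p : M3)
    (hnp : ∃ c : ℝ → E2, LipschitzWith 1 c ∧ c p.2 = p.1 ∧ ∀ t : ℝ, f (c t) ≠ t) :
    (∃ ξ : E2, ‖ξ‖ = 1 ∧ ∀ x : E2, (inner ℝ x ξ : ℝ) - f x ≤ (inner ℝ p.1 ξ : ℝ) - p.2) ∨
    (∃ ξ : E2, ‖ξ‖ = 1 ∧ ∀ x : E2, (inner ℝ p.1 ξ : ℝ) - p.2 ≤ (inner ℝ x ξ : ℝ) - f x) := by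
  obtain ⟨c, hc, hcp, hne⟩ := hnp
  have hgc : Continuous fun t : ℝ => f (c t) - t :=
    (hf.continuous.comp hc.continuous).sub continuous_id
  by_cases hcase : ∀ t : ℝ, f (c t) < t
  · right
    obtain ⟨ξ, hξ, h⟩ := hard f hf c hc p.1 p.2 hcp hcase
    refine ⟨ξ, hξ, fun x => ?_⟩
    have := h x
    rw [inner_sub_left] at this
    linarith
  · left
    push_neg at hcase
    obtain ⟨t₀, ht₀⟩ := hcase
    have ht₀' : t₀ < f (c t₀) := lt_of_le_of_ne ht₀ (Ne.symm (hne t₀))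
    have hall : ∀ t : ℝ, t < f (c t) := by
      intro t₁
      by_contra h1
      push_neg at h1
      have ht₁ : f (c t₁) < t₁ := lt_of_le_of_ne h1 (hne t₁)
      have h0 : (0:ℝ) ∈ uIcc (f (c t₀) - t₀) (f (c t₁) - t₁) := by
        rw [mem_uIcc]
        right
        constructor <;> linarith
      obtain ⟨t, _, ht⟩ := intermediate_value_uIcc (hgc.continuousOn (s := uIcc t₀ t₁)) h0
      exact hne t (by linarith [sub_eq_zero.mp ht])
    obtain ⟨ξ, hξ, h⟩ := hard' f hf c hc p.1 p.2 hcp hall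
    refine ⟨ξ, hξ, fun x => ?_⟩
    have := h x
    rw [inner_sub_left] at this
    linarith

end DodAux

/-- the domain of dependence of an entire spacelike graph satisfies
exactly one of the four alternatives: all of ℝ³; the region between two parallel
null planes; an intersection of futures of null planes; or an intersection of pasts
of null planes. -/
theorem domain_of_dependence_trichotomy
    (f : E2 → ℝ) (hf : ContDiff ℝ 1 f) (hgrad : ∀ x : E2, ‖fderiv ℝ f x‖ < 1)
    (DD : Set M3)
    (hDD : DD = {p : M3 | ∀ c : ℝ → E2, LipschitzWith 1 c → c p.2 = p.1 →
      ∃ t : ℝ, f (c t) = t}) :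
    ∃! i : Fin 4,
      ![DD = univ,
        (∃ ξ ∈ S1, ∃ c' c : ℝ, c' < c ∧
          DD = {x : M3 | c' < (inner ℝ x.1 ξ : ℝ) - x.2 ∧ (inner ℝ x.1 ξ : ℝ) - x.2 < c}),
        (∃ F : Set (E2 × ℝ), F.Nonempty ∧ (∀ p ∈ F, p.1 ∈ S1) ∧
          DD = ⋂ p ∈ F, {x : M3 | (inner ℝ x.1 p.1 : ℝ) - x.2 < p.2}),
        (∃ F : Set (E2 × ℝ), F.Nonempty ∧ (∀ p ∈ F, p.1 ∈ S1) ∧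
          DD = ⋂ p ∈ F, {x : M3 | p.2 < (inner ℝ x.1 p.1 : ℝ) - x.2})] i := by
  have hS1 : ∀ ξ : E2, ξ ∈ S1 ↔ ‖ξ‖ = 1 := fun ξ => mem_sphere_zero_iff_norm
  have hlip : LipschitzWith 1 f := my_lip f hf hgrad
  set UBs : Set (E2 × ℝ) :=
    {q | q.1 ∈ S1 ∧ ∀ x : E2, (inner ℝ x q.1 : ℝ) - f x ≤ q.2} with hUBs
  set LBs : Set (E2 × ℝ) :=
    {q | q.1 ∈ S1 ∧ ∀ x : E2, q.2 ≤ (inner ℝ x q.1 : ℝ) - f x} with hLBs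
  -- the master membership characterization
  have hmem : ∀ p : M3, p ∈ DD ↔
      ((∀ q ∈ UBs, (inner ℝ p.1 q.1 : ℝ) - p.2 < q.2) ∧
       (∀ q ∈ LBs, q.2 < (inner ℝ p.1 q.1 : ℝ) - p.2)) := by
    intro p
    constructor
    · intro hp
      rw [hDD] at hp
      simp only [mem_setOf_eq] at hp
      exact ⟨fun q hq => easyUB f hf hgrad q.1 ((hS1 q.1).mp hq.1) q.2 hq.2 p hp,
             fun q hq => easyLB f hf hgrad q.1 ((hS1 q.1).mp hq.1) q.2 hq.2 p hp⟩
    · intro hcond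
      rw [hDD]
      simp only [mem_setOf_eq]
      by_contra hnp
      push_neg at hnp
      rcases notDD f hlip p hnp with ⟨ξ, hξ, h⟩ | ⟨ξ, hξ, h⟩
      · exact absurd (hcond.1 (ξ, (inner ℝ p.1 ξ : ℝ) - p.2) ⟨(hS1 ξ).mpr hξ, h⟩)
          (lt_irrefl _)
      · exact absurd (hcond.2 (ξ, (inner ℝ p.1 ξ : ℝ) - p.2) ⟨(hS1 ξ).mpr hξ, h⟩)
          (lt_irrefl _)
  have hgraph : ((0, f 0) : M3) ∈ DD := by
    rw [hDD]
    simp only [mem_setOf_eq]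
    intro c hc hca
    exact ⟨f 0, by rw [hca]⟩
  -- vertical shifts
  have hshift_up : LBs = ∅ → ∀ p ∈ DD, ∀ s : ℝ, 0 ≤ s → ((p.1, p.2 + s) : M3) ∈ DD := by
    intro hLB p hp s hs
    rw [hmem] at hp ⊢
    refine ⟨fun q hq => ?_, fun q hq => by rw [hLB] at hq; exact absurd hq (notMem_empty q)⟩
    have := hp.1 q hq
    simp only
    linarith
  have hshift_down : UBs = ∅ → ∀ p ∈ DD, ∀ s : ℝ, 0 ≤ s → ((p.1, p.2 - s) : M3) ∈ DD := by
    intro hUB p hp s hs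
    rw [hmem] at hp ⊢
    refine ⟨fun q hq => by rw [hUB] at hq; exact absurd hq (notMem_empty q), fun q hq => ?_⟩
    have := hp.2 q hq
    simp only
    linarith
  -- closure of intersections of half-spaces under vertical shifts
  have hfut_up : ∀ (F : Set (E2 × ℝ)) (x : M3) (s : ℝ), 0 ≤ s →
      x ∈ ⋂ p ∈ F, {y : M3 | (inner ℝ y.1 p.1 : ℝ) - y.2 < p.2} →
      ((x.1, x.2 + s) : M3) ∈ ⋂ p ∈ F, {y : M3 | (inner ℝ y.1 p.1 : ℝ) - y.2 < p.2} := by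
    intro F x s hs hx
    simp only [mem_iInter, mem_setOf_eq] at hx ⊢
    intro q hq
    have := hx q hq
    linarith
  have hpast_down : ∀ (F : Set (E2 × ℝ)) (x : M3) (s : ℝ), 0 ≤ s →
      x ∈ ⋂ p ∈ F, {y : M3 | p.2 < (inner ℝ y.1 p.1 : ℝ) - y.2} →
      ((x.1, x.2 - s) : M3) ∈ ⋂ p ∈ F, {y : M3 | p.2 < (inner ℝ y.1 p.1 : ℝ) - y.2} := by
    intro F x s hs hx
    simp only [mem_iInter, mem_setOf_eq] at hx ⊢
    intro q hq
    have := hx q hq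
    linarith
  have hinner : ∀ (r : ℝ) (ξ : E2), ‖ξ‖ = 1 → (inner ℝ ((r • ξ : E2)) ξ : ℝ) = r := by
    intro r ξ hξ
    rw [real_inner_smul_left, real_inner_self_eq_norm_mul_norm, hξ]
    ring
  by_cases hU : UBs = ∅ <;> by_cases hL : LBs = ∅
  · -- Case 1 : no null support planes at all; DD = ℝ³
    have hDDuniv : DD = univ := by
      ext p
      simp only [mem_univ, iff_true]
      rw [hmem]
      exact ⟨fun q hq => by rw [hU] at hq; exact absurd hq (notMem_empty q),
             fun q hq => by rw [hL] at hq; exact absurd hq (notMem_empty q)⟩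
    refine ⟨0, hDDuniv, ?_⟩
    intro j hj
    fin_cases j
    · rfl
    · exfalso
      replace hj : ∃ ξ ∈ S1, ∃ c' c : ℝ, c' < c ∧
          DD = {x : M3 | c' < (inner ℝ x.1 ξ : ℝ) - x.2 ∧ (inner ℝ x.1 ξ : ℝ) - x.2 < c} := hj
      obtain ⟨ξ, hξ, c', cc, _, hDDeq⟩ := hj
      have hx : ((cc • ξ, 0) : M3) ∈ DD := by rw [hDDuniv]; trivial
      rw [hDDeq] at hx
      obtain ⟨-, h2⟩ := hx
      rw [show ((cc • ξ, (0:ℝ)) : M3).1 = cc • ξ from rfl] at h2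
      rw [hinner cc ξ ((hS1 ξ).mp hξ)] at h2
      simp at h2
    · exfalso
      replace hj : ∃ F : Set (E2 × ℝ), F.Nonempty ∧ (∀ p ∈ F, p.1 ∈ S1) ∧
          DD = ⋂ p ∈ F, {x : M3 | (inner ℝ x.1 p.1 : ℝ) - x.2 < p.2} := hj
      obtain ⟨F, ⟨q, hq⟩, hFS, hDDeq⟩ := hj
      have hx : (((q.2 + 1) • q.1, 0) : M3) ∈ DD := by rw [hDDuniv]; trivial
      rw [hDDeq] at hx
      simp only [mem_iInter, mem_setOf_eq] at hx
      have := hx q hq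
      rw [hinner (q.2 + 1) q.1 ((hS1 q.1).mp (hFS q hq))] at this
      linarith
    · exfalso
      replace hj : ∃ F : Set (E2 × ℝ), F.Nonempty ∧ (∀ p ∈ F, p.1 ∈ S1) ∧
          DD = ⋂ p ∈ F, {x : M3 | p.2 < (inner ℝ x.1 p.1 : ℝ) - x.2} := hj
      obtain ⟨F, ⟨q, hq⟩, hFS, hDDeq⟩ := hj
      have hx : (((q.2 - 1) • q.1, 0) : M3) ∈ DD := by rw [hDDuniv]; trivial
      rw [hDDeq] at hx
      simp only [mem_iInter, mem_setOf_eq] at hx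
      have := hx q hq
      rw [hinner (q.2 - 1) q.1 ((hS1 q.1).mp (hFS q hq))] at this
      linarith
  · -- Case 2 : only lower support planes; DD = intersection of pasts  (i = 3)
    obtain ⟨qL, hqL⟩ := Set.nonempty_iff_ne_empty.mpr hL
    have hDDeq : DD = ⋂ q ∈ LBs, {x : M3 | q.2 < (inner ℝ x.1 q.1 : ℝ) - x.2} := by
      ext p
      rw [hmem]
      simp only [mem_iInter, mem_setOf_eq]
      constructor
      · exact fun h q hq => h.2 q hq
      · intro h
        exact ⟨fun q hq => by rw [hU] at hq; exact absurd hq (notMem_empty q), h⟩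
    refine ⟨3, ⟨LBs, ⟨qL, hqL⟩, fun q hq => hq.1, hDDeq⟩, ?_⟩
    intro j hj
    fin_cases j
    · exfalso
      replace hj : DD = univ := hj
      have hx : (((qL.2 - 1) • qL.1, 0) : M3) ∈ DD := by rw [hj]; trivial
      rw [hDDeq] at hx
      simp only [mem_iInter, mem_setOf_eq] at hx
      have := hx qL hqL
      rw [hinner (qL.2 - 1) qL.1 ((hS1 qL.1).mp hqL.1)] at this
      linarith
    · exfalso
      replace hj : ∃ ξ ∈ S1, ∃ c' c : ℝ, c' < c ∧
          DD = {x : M3 | c' < (inner ℝ x.1 ξ : ℝ) - x.2 ∧ (inner ℝ x.1 ξ : ℝ) - x.2 < c} := hj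
      obtain ⟨ξ, hξ, c', cc, _, hDDslab⟩ := hj
      have hx0 := hgraph
      have h1 : (inner ℝ ((0:E2), f 0).1 ξ : ℝ) - ((0:E2), f 0).2 < cc := by
        have := hx0
        rw [hDDslab] at this
        exact this.2
      set s : ℝ := cc - ((inner ℝ ((0:E2)) ξ : ℝ) - f 0) with hs
      have hy : (((0:E2), f 0 - s) : M3) ∈ DD := hshift_down hU _ hx0 s (by simp only [hs]; linarith)
      rw [hDDslab] at hy
      have := hy.2
      simp only [hs] at this
      linarith
    · exfalso
      replace hj : ∃ F : Set (E2 × ℝ), F.Nonempty ∧ (∀ p ∈ F, p.1 ∈ S1) ∧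
          DD = ⋂ p ∈ F, {x : M3 | (inner ℝ x.1 p.1 : ℝ) - x.2 < p.2} := hj
      obtain ⟨F, ⟨q, hq⟩, hFS, hDDeq2⟩ := hj
      have hx0 := hgraph
      have h1 : (inner ℝ ((0:E2)) q.1 : ℝ) - f 0 < q.2 := by
        have := hx0
        rw [hDDeq2] at this
        simp only [mem_iInter, mem_setOf_eq] at this
        exact this q hq
      set s : ℝ := q.2 - ((inner ℝ ((0:E2)) q.1 : ℝ) - f 0) with hs
      have hy : (((0:E2), f 0 - s) : M3) ∈ DD := hshift_down hU _ hx0 s (by simp only [hs]; linarith)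
      rw [hDDeq2] at hy
      simp only [mem_iInter, mem_setOf_eq] at hy
      have := hy q hq
      simp only [hs] at this
      linarith
    · rfl
  · -- Case 3 : only upper support planes; DD = intersection of futures  (i = 2)
    obtain ⟨qU, hqU⟩ := Set.nonempty_iff_ne_empty.mpr hU
    have hDDeq : DD = ⋂ q ∈ UBs, {x : M3 | (inner ℝ x.1 q.1 : ℝ) - x.2 < q.2} := by
      ext p
      rw [hmem]
      simp only [mem_iInter, mem_setOf_eq]
      constructor
      · exact fun h q hq => h.1 q hq
      · intro h
        exact ⟨h, fun q hq => by rw [hL] at hq; exact absurd hq (notMem_empty q)⟩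
    refine ⟨2, ⟨UBs, ⟨qU, hqU⟩, fun q hq => hq.1, hDDeq⟩, ?_⟩
    intro j hj
    fin_cases j
    · exfalso
      replace hj : DD = univ := hj
      have hx : (((qU.2 + 1) • qU.1, 0) : M3) ∈ DD := by rw [hj]; trivial
      rw [hDDeq] at hx
      simp only [mem_iInter, mem_setOf_eq] at hx
      have := hx qU hqU
      rw [hinner (qU.2 + 1) qU.1 ((hS1 qU.1).mp hqU.1)] at this
      linarith
    · exfalso
      replace hj : ∃ ξ ∈ S1, ∃ c' c : ℝ, c' < c ∧
          DD = {x : M3 | c' < (inner ℝ x.1 ξ : ℝ) - x.2 ∧ (inner ℝ x.1 ξ : ℝ) - x.2 < c} := hj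
      obtain ⟨ξ, hξ, c', cc, _, hDDslab⟩ := hj
      have hx0 := hgraph
      have h1 : c' < (inner ℝ ((0:E2)) ξ : ℝ) - f 0 := by
        have := hx0
        rw [hDDslab] at this
        exact this.1
      set s : ℝ := ((inner ℝ ((0:E2)) ξ : ℝ) - f 0) - c' with hs
      have hy : (((0:E2), f 0 + s) : M3) ∈ DD := hshift_up hL _ hx0 s (by simp only [hs]; linarith)
      rw [hDDslab] at hy
      have := hy.1
      simp only [hs] at this
      linarith
    · rfl
    · exfalso
      replace hj : ∃ F : Set (E2 × ℝ), F.Nonempty ∧ (∀ p ∈ F, p.1 ∈ S1) ∧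
          DD = ⋂ p ∈ F, {x : M3 | p.2 < (inner ℝ x.1 p.1 : ℝ) - x.2} := hj
      obtain ⟨F, ⟨q, hq⟩, hFS, hDDeq2⟩ := hj
      have hx0 := hgraph
      have h1 : q.2 < (inner ℝ ((0:E2)) q.1 : ℝ) - f 0 := by
        have := hx0
        rw [hDDeq2] at this
        simp only [mem_iInter, mem_setOf_eq] at this
        exact this q hq
      set s : ℝ := ((inner ℝ ((0:E2)) q.1 : ℝ) - f 0) - q.2 with hs
      have hy : (((0:E2), f 0 + s) : M3) ∈ DD := hshift_up hL _ hx0 s (by simp only [hs]; linarith)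
      rw [hDDeq2] at hy
      simp only [mem_iInter, mem_setOf_eq] at hy
      have := hy q hq
      simp only [hs] at this
      linarith
  · -- Case 4 : support planes on both sides; DD is a slab between two null planes (i = 1)
    obtain ⟨qU, hqU⟩ := Set.nonempty_iff_ne_empty.mpr hU
    obtain ⟨qL, hqL⟩ := Set.nonempty_iff_ne_empty.mpr hL
    have huniq : ∀ q ∈ UBs, ∀ r ∈ LBs, q.1 = r.1 := by
      intro q hq r hr
      by_contra hne'
      have hd : q.1 - r.1 ≠ 0 := sub_ne_zero.mpr hne'
      have hdn : 0 < ‖q.1 - r.1‖ := norm_pos_iff.mpr hd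
      have hkey : ∀ x : E2, (inner ℝ x (q.1 - r.1) : ℝ) ≤ q.2 - r.2 := by
        intro x
        have h1 := hq.2 x
        have h2 := hr.2 x
        rw [inner_sub_right]
        linarith
      set s : ℝ := (|q.2 - r.2| + 1) / ‖q.1 - r.1‖ ^ 2 with hsdef
      have h3 := hkey (s • (q.1 - r.1))
      rw [real_inner_smul_left, real_inner_self_eq_norm_mul_norm] at h3
      have h4 : s * (‖q.1 - r.1‖ * ‖q.1 - r.1‖) = |q.2 - r.2| + 1 := by
        rw [hsdef, show ‖q.1 - r.1‖ * ‖q.1 - r.1‖ = ‖q.1 - r.1‖ ^ 2 from (sq _).symm,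
          div_mul_cancel₀ _ (by positivity : ‖q.1 - r.1‖ ^ 2 ≠ 0)]
      rw [h4] at h3
      have := le_abs_self (q.2 - r.2)
      linarith
    set ξ : E2 := qU.1 with hξdef
    have hξS : ξ ∈ S1 := hqU.1
    have hq1eq : ∀ q ∈ UBs, q.1 = ξ := by
      intro q hq
      rw [hξdef]
      rw [huniq q hq qL hqL, huniq qU hqU qL hqL]
    have hr1eq : ∀ q ∈ LBs, q.1 = ξ := by
      intro q hq
      rw [hξdef, huniq qU hqU q hq]
    have hbddA : BddAbove (Set.range fun x : E2 => (inner ℝ x ξ : ℝ) - f x) := by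
      refine ⟨qU.2, ?_⟩
      rintro _ ⟨x, rfl⟩
      have := hqU.2 x
      rwa [hξdef]
    have hbddB : BddBelow (Set.range fun x : E2 => (inner ℝ x ξ : ℝ) - f x) := by
      refine ⟨qL.2, ?_⟩
      rintro _ ⟨x, rfl⟩
      have := hqL.2 x
      rwa [← hr1eq qL hqL]
    set cc : ℝ := sSup (Set.range fun x : E2 => (inner ℝ x ξ : ℝ) - f x) with hccdef
    set c' : ℝ := sInf (Set.range fun x : E2 => (inner ℝ x ξ : ℝ) - f x) with hc'def
    have hccU : (ξ, cc) ∈ UBs := ⟨hξS, fun x => le_csSup hbddA (mem_range_self x)⟩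
    have hc'L : (ξ, c') ∈ LBs := ⟨hξS, fun x => csInf_le hbddB (mem_range_self x)⟩
    have hccmin : ∀ q ∈ UBs, cc ≤ q.2 := by
      intro q hq
      apply csSup_le (range_nonempty _)
      rintro _ ⟨x, rfl⟩
      have := hq.2 x
      rwa [hq1eq q hq] at this
    have hc'max : ∀ q ∈ LBs, q.2 ≤ c' := by
      intro q hq
      apply le_csInf (range_nonempty _)
      rintro _ ⟨x, rfl⟩
      have := hq.2 x
      rwa [hr1eq q hq] at this
    have hDDslab : DD = {x : M3 | c' < (inner ℝ x.1 ξ : ℝ) - x.2 ∧ (inner ℝ x.1 ξ : ℝ) - x.2 < cc} := by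
      ext p
      rw [hmem]
      simp only [mem_setOf_eq]
      constructor
      · exact fun h => ⟨h.2 (ξ, c') hc'L, h.1 (ξ, cc) hccU⟩
      · intro h
        constructor
        · intro q hq
          rw [hq1eq q hq]
          exact lt_of_lt_of_le h.2 (hccmin q hq)
        · intro q hq
          rw [hr1eq q hq]
          exact lt_of_le_of_lt (hc'max q hq) h.1
    have hx0 := hgraph
    have hx0slab : c' < (inner ℝ ((0:E2)) ξ : ℝ) - f 0 ∧ (inner ℝ ((0:E2)) ξ : ℝ) - f 0 < cc := by
      have := hx0
      rw [hDDslab] at this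
      exact this
    have hlt : c' < cc := lt_trans hx0slab.1 hx0slab.2
    refine ⟨1, ⟨ξ, hξS, c', cc, hlt, hDDslab⟩, ?_⟩
    intro j hj
    fin_cases j
    · exfalso
      replace hj : DD = univ := hj
      have hx : ((cc • ξ, 0) : M3) ∈ DD := by rw [hj]; trivial
      rw [hDDslab] at hx
      have := hx.2
      rw [show ((cc • ξ, (0:ℝ)) : M3).1 = cc • ξ from rfl] at this
      rw [hinner cc ξ ((hS1 ξ).mp hξS)] at this
      simp at this
    · rfl
    · exfalso
      replace hj : ∃ F : Set (E2 × ℝ), F.Nonempty ∧ (∀ p ∈ F, p.1 ∈ S1) ∧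
          DD = ⋂ p ∈ F, {x : M3 | (inner ℝ x.1 p.1 : ℝ) - x.2 < p.2} := hj
      obtain ⟨F, _, _, hDDeq2⟩ := hj
      set s : ℝ := ((inner ℝ ((0:E2)) ξ : ℝ) - f 0) - c' with hs
      have hy : (((0:E2), f 0 + s) : M3) ∈ DD := by
        rw [hDDeq2]
        apply hfut_up F ((0:E2), f 0) s (by simp only [hs]; linarith [hx0slab.1])
        rw [← hDDeq2]
        exact hx0
      rw [hDDslab] at hy
      have := hy.1
      simp only [hs] at this
      linarith
    · exfalso
      replace hj : ∃ F : Set (E2 × ℝ), F.Nonempty ∧ (∀ p ∈ F, p.1 ∈ S1) ∧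
          DD = ⋂ p ∈ F, {x : M3 | p.2 < (inner ℝ x.1 p.1 : ℝ) - x.2} := hj
      obtain ⟨F, _, _, hDDeq2⟩ := hj
      set s : ℝ := cc - ((inner ℝ ((0:E2)) ξ : ℝ) - f 0) with hs
      have hy : (((0:E2), f 0 - s) : M3) ∈ DD := by
        rw [hDDeq2]
        apply hpast_down F ((0:E2), f 0) s (by simp only [hs]; linarith [hx0slab.2])
        rw [← hDDeq2]
        exact hx0
      rw [hDDslab] at hy
      have := hy.2
      simp only [hs] at this
      linarith

end
end
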